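/- Let K be a complete discrete valuation field of mixed characteristic (0, p) containing a primitive p-th root of unity ζ_p, with residue field F and prime element π. Let L = K(α) be a Kummer extension with α^p = a ∈ K^×. Suppose a ∈ (1 + π^{mp}·u)·(1 + π^{n+1}·O_K) for some integer m with 1 ≤ n = mp < e_K·p/(p − 1), and some u ∈ O_K whose residue class ū does not belong to F^p. Then the residue field E of L equals F(ū^{1/p}) and e(L/K) = 1. -/

import Mathlib

set_option maxHeartbeats 1000000


noncomputable section

open IsLocalRing Multiplicative

local notation "ℤₘ₀" => WithZero (Multiplicative ℤ)

namespace KummerAux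

lemma zm0_coe_pow (z : ℤ) (n : ℕ) :
    ((ofAdd z : Multiplicative ℤ) : ℤₘ₀) ^ n = ((ofAdd ((n : ℤ) * z) : Multiplicative ℤ) : ℤₘ₀) := by
  rw [← WithZero.coe_pow, WithZero.coe_inj]
  apply Multiplicative.toAdd.injective
  simp [toAdd_pow, mul_comm]

lemma zm0_pow_eq_one {x : ℤₘ₀} {n : ℕ} (hn : n ≠ 0) (h : x ^ n = 1) : x = 1 := by
  rcases (em (x = 0)) with h0 | h0
  · subst h0; rw [zero_pow hn] at h; exact absurd h zero_ne_one
  · obtain ⟨y, rfl⟩ := WithZero.ne_zero_iff_exists.1 h0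
    rw [← WithZero.coe_pow, ← WithZero.coe_one, WithZero.coe_inj] at h
    have := congrArg Multiplicative.toAdd h
    simp only [toAdd_pow, toAdd_one, smul_eq_mul] at this
    have hy : Multiplicative.toAdd y = 0 := by
      rcases mul_eq_zero.1 this with h' | h'
      · exact absurd (by exact_mod_cast h') hn
      · exact h'
    rw [← WithZero.coe_one, WithZero.coe_inj]
    apply Multiplicative.toAdd.injective
    simpa using hy

lemma zm0_lt_coe {w : ℤ} {x : ℤₘ₀} :
    ((ofAdd w : Multiplicative ℤ) : ℤₘ₀) < x ↔ ((ofAdd (w + 1) : Multiplicative ℤ) : ℤₘ₀) ≤ x := by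
  rcases (em (x = 0)) with h0 | h0
  · subst h0
    simp [WithZero.coe_ne_zero, le_zero_iff, not_lt_zero']
  · obtain ⟨y, rfl⟩ := WithZero.ne_zero_iff_exists.1 h0
    rw [WithZero.coe_lt_coe, WithZero.coe_le_coe]
    constructor
    · intro h
      have : w < Multiplicative.toAdd y := h
      have : w + 1 ≤ Multiplicative.toAdd y := this
      exact this
    · intro h
      have : w + 1 ≤ Multiplicative.toAdd y := h
      exact show w < Multiplicative.toAdd y from by omega

variable {R : Type*} [CommRing R]

lemma val_natCast_le_one (v : Valuation R ℤₘ₀) (n : ℕ) : v n ≤ 1 := by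
  induction n with
  | zero => simp
  | succ k ih =>
      push_cast
      exact le_trans (v.map_add _ _) (max_le ih (le_of_eq v.map_one))

lemma val_pow_sub_one_le (v : Valuation R ℤₘ₀) {x : R} (hx : v x ≤ 1) (n : ℕ) :
    v (x ^ n - 1) ≤ v (x - 1) := by
  rw [← geom_sum_mul, v.map_mul]
  calc v (∑ i ∈ Finset.range n, x ^ i) * v (x - 1) ≤ 1 * v (x - 1) := by
        apply mul_le_mul_left
        exact v.map_sum_le (fun i _ => by rw [v.map_pow]; exact pow_le_one' hx i)
    _ = v (x - 1) := one_mul _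


variable {K : Type*} [Field K]

lemma isUnit_val_eq_one (v : Valuation K ℤₘ₀) {x : v.valuationSubring} (h : IsUnit x) :
    v (x : K) = 1 := by
  obtain ⟨u, rfl⟩ := h
  have h1 : v ((u : v.valuationSubring) : K) ≤ 1 := (u : v.valuationSubring).2
  have h2 : v (((u⁻¹ : _) : v.valuationSubring) : K) ≤ 1 := ((u⁻¹ : _) : v.valuationSubring).2
  have hmul : ((u : v.valuationSubring) : K) * (((u⁻¹ : _) : v.valuationSubring) : K) = 1 := by
    rw [← Subring.coe_mul]; norm_cast; simp
  refine le_antisymm h1 ?_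
  have hh := map_mul v ((u : v.valuationSubring) : K) (((u⁻¹ : _) : v.valuationSubring) : K)
  rw [hmul, map_one] at hh
  calc (1 : ℤₘ₀) = _ * _ := hh
    _ ≤ v ((u : v.valuationSubring) : K) * 1 := mul_le_mul_right h2 _
    _ = v ((u : v.valuationSubring) : K) := mul_one _

lemma mem_max_of_val_lt (v : Valuation K ℤₘ₀) {x : v.valuationSubring} (h : v (x : K) < 1) :
    x ∈ maximalIdeal v.valuationSubring := by
  rw [IsLocalRing.mem_maximalIdeal, mem_nonunits_iff]
  intro hu
  exact absurd (isUnit_val_eq_one v hu) (ne_of_lt h)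

lemma val_eq_one_of_residue_ne (v : Valuation K ℤₘ₀) {x : v.valuationSubring}
    (h : residue v.valuationSubring x ≠ 0) : v (x : K) = 1 := by
  rcases lt_or_eq_of_le (show v (x : K) ≤ 1 from x.2) with hlt | heq
  · exact absurd (Ideal.Quotient.eq_zero_iff_mem.2 (mem_max_of_val_lt v hlt)) h
  · exact heq

lemma residue_ne_zero_of_val_eq_one (v : Valuation K ℤₘ₀) {x : v.valuationSubring}
    (h : v (x : K) = 1) : residue v.valuationSubring x ≠ 0 := by
  intro h0
  have hm := Ideal.Quotient.eq_zero_iff_mem.1 h0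
  rw [IsLocalRing.mem_maximalIdeal, mem_nonunits_iff] at hm
  apply hm
  have hx0 : (x : K) ≠ 0 := by
    intro hx
    rw [hx, map_zero] at h
    exact zero_ne_one h
  have hinv : v ((x : K)⁻¹) ≤ 1 := by rw [map_inv₀, h, inv_one]
  exact IsUnit.of_mul_eq_one (a := x) ⟨(x : K)⁻¹, hinv⟩
    (Subtype.ext (by show ((x : K) * (x : K)⁻¹ : K) = 1; exact mul_inv_cancel₀ hx0))


def oz (z : ℤ) : ℤₘ₀ := ((ofAdd z : Multiplicative ℤ) : ℤₘ₀)

lemma oz_mul (a b : ℤ) : oz a * oz b = oz (a + b) := by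
  rw [oz, oz, oz, ← WithZero.coe_mul, WithZero.coe_inj, ← ofAdd_add]

lemma oz_pow (a : ℤ) (n : ℕ) : oz a ^ n = oz ((n : ℤ) * a) := zm0_coe_pow a n

lemma oz_le {a b : ℤ} : oz a ≤ oz b ↔ a ≤ b := by
  rw [oz, oz, WithZero.coe_le_coe, Multiplicative.ofAdd_le]

lemma oz_lt {a b : ℤ} : oz a < oz b ↔ a < b := by
  rw [oz, oz, WithZero.coe_lt_coe, Multiplicative.ofAdd_lt]

lemma oz_inj {a b : ℤ} : oz a = oz b ↔ a = b := by
  rw [oz, oz, WithZero.coe_inj]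
  exact ⟨fun h => by simpa using congrArg Multiplicative.toAdd h, fun h => by rw [h]⟩

lemma oz_ne_zero (a : ℤ) : oz a ≠ 0 := WithZero.coe_ne_zero

lemma oz_zero : oz 0 = 1 := rfl

lemma oz_le_one {a : ℤ} : oz a ≤ 1 ↔ a ≤ 0 := by rw [← oz_zero, oz_le]

lemma oz_lt_one {a : ℤ} : oz a < 1 ↔ a < 0 := by rw [← oz_zero, oz_lt]

lemma lt_oz_iff {w : ℤ} {x : ℤₘ₀} : oz w < x ↔ oz (w + 1) ≤ x := zm0_lt_coe

lemma eq_oz_of_ne_zero {x : ℤₘ₀} (h : x ≠ 0) : ∃ z : ℤ, x = oz z := by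
  obtain ⟨y, rfl⟩ := WithZero.ne_zero_iff_exists.1 h
  exact ⟨Multiplicative.toAdd y, by rw [oz]; norm_cast⟩

lemma oz_pow_eq_one {a : ℤ} {n : ℕ} (hn : n ≠ 0) (h : oz a ^ n = 1) : a = 0 := by
  have := zm0_pow_eq_one hn h
  rw [← oz_zero, oz_inj] at this
  exact this

end KummerAux

open KummerAux Polynomial

variable {K L : Type*} [Field K] [Field L] [Algebra K L]

/-- The ring homomorphism between valuation rings induced by an extension of valued fields
whose ramification index is `e`. -/
def VIntHom (vK : Valuation K ℤₘ₀) (vL : Valuation L ℤₘ₀) (e : ℕ)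
    (h : ∀ x : K, vL (algebraMap K L x) = vK x ^ e) :
    vK.valuationSubring →+* vL.valuationSubring :=
  RingHom.codRestrict ((algebraMap K L).comp vK.valuationSubring.subtype)
    vL.valuationSubring.toSubring
    (fun x => by
      have hx : vK (x : K) ≤ 1 := x.2
      show vL (algebraMap K L (x : K)) ≤ 1
      rw [h]
      exact pow_le_one' hx e)

theorem VIntHom_isLocalHom (vK : Valuation K ℤₘ₀) (vL : Valuation L ℤₘ₀) (e : ℕ) (he : 0 < e)
    (h : ∀ x : K, vL (algebraMap K L x) = vK x ^ e) :
    IsLocalHom (VIntHom vK vL e h) := by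
  constructor
  intro a ha
  obtain ⟨u, hu⟩ := ha
  have hx : vL ((u : vL.valuationSubring) : L) ≤ 1 := (u : vL.valuationSubring).2
  have hx' : vL (((u⁻¹ : _) : vL.valuationSubring) : L) ≤ 1 := ((u⁻¹ : _) : vL.valuationSubring).2
  have hmul : ((u : vL.valuationSubring) : L) * (((u⁻¹ : _) : vL.valuationSubring) : L) = 1 := by
    rw [← Subring.coe_mul]
    norm_cast
    simp
  have h1 : vL ((u : vL.valuationSubring) : L) = 1 := by
    refine le_antisymm hx ?_
    have hh := map_mul vL ((u : vL.valuationSubring) : L) (((u⁻¹ : _) : vL.valuationSubring) : L)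
    rw [hmul, map_one] at hh
    calc (1 : ℤₘ₀) = vL ((u : vL.valuationSubring) : L) * vL (((u⁻¹ : _) : vL.valuationSubring) : L) := hh
      _ ≤ vL ((u : vL.valuationSubring) : L) * 1 := mul_le_mul' le_rfl hx'
      _ = vL ((u : vL.valuationSubring) : L) := mul_one _
  have h2 : vL (algebraMap K L (a : K)) = 1 := by
    rw [hu] at h1
    exact h1
  have hKa : vK (a : K) = 1 := by
    rw [h] at h2
    by_contra hne
    have hlt : vK (a : K) < 1 := lt_of_le_of_ne a.2 hne
    have : vK (a : K) ^ e < 1 := pow_lt_one' hlt he.ne'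
    rw [h2] at this
    exact lt_irrefl _ this
  have hne : (a : K) ≠ 0 := by
    intro h0
    rw [h0, map_zero] at hKa
    exact zero_ne_one hKa
  refine IsUnit.of_mul_eq_one (a := a) ⟨(a : K)⁻¹, ?_⟩ (Subtype.ext ?_)
  · show vK (a : K)⁻¹ ≤ 1
    rw [map_inv₀, hKa, inv_one]
  · show ((a : K) * (a : K)⁻¹ : K) = 1
    exact mul_inv_cancel₀ hne

/-- The induced homomorphism between residue fields of an extension of valued fields. -/
def ResHom (vK : Valuation K ℤₘ₀) (vL : Valuation L ℤₘ₀) (e : ℕ) (he : 0 < e)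
    (h : ∀ x : K, vL (algebraMap K L x) = vK x ^ e) :
    ResidueField vK.valuationSubring →+* ResidueField vL.valuationSubring :=
  haveI : IsLocalHom (VIntHom vK vL e h) := VIntHom_isLocalHom vK vL e he h
  IsLocalRing.ResidueField.map (VIntHom vK vL e h)

/-- Lemma 2.4 (5): Let `K` be a complete discrete valuation field of mixed characteristic
`(0, p)` containing a primitive `p`-th root of unity, with prime element `π` and
`e_K = ord_K p`, and let `L = K(α)` be the Kummer extension given by `α ^ p = a` with
`a ∈ (1 + π^{mp} u)(1 + π^{n+1} 𝒪_K)`, where `1 ≤ n = mp < e_K p/(p-1)` and `u ∈ 𝒪_K`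
has residue class `ū ∉ F^p`.  Then the residue field of `L` equals `F(ū^{1/p})` and
`e(L/K) = 1`. -/
theorem kummer_ferocious_principal_unit
    (p : ℕ) (hp : p.Prime)
    (K : Type*) [Field K] [CharZero K] (vK : Valuation K ℤₘ₀)
    (hsurjK : Function.Surjective vK)
    (hcompl : IsAdicComplete (maximalIdeal vK.valuationSubring) vK.valuationSubring)
    (hres : CharP (ResidueField vK.valuationSubring) p)
    (ζ : K) (hζ : IsPrimitiveRoot ζ p)
    (L : Type*) [Field L] [Algebra K L] (vL : Valuation L ℤₘ₀)
    (hsurjL : Function.Surjective vL)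
    (e : ℕ) (he : 0 < e) (hcomp : ∀ x : K, vL (algebraMap K L x) = vK x ^ e)
    (π : K) (hπ : vK π = ((ofAdd (-1 : ℤ) : Multiplicative ℤ) : ℤₘ₀))
    (eK : ℕ) (heK : vK (p : K) = ((ofAdd (-(eK : ℤ)) : Multiplicative ℤ) : ℤₘ₀))
    (m : ℕ) (hm : 1 ≤ m) (hbound : m * p * (p - 1) < eK * p)
    (u : vK.valuationSubring)
    (hu : ¬ ∃ y : ResidueField vK.valuationSubring,
      y ^ p = residue vK.valuationSubring u)
    (a : K)
    (ha : ∃ c : K, vK c ≤ 1 ∧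
      a = (1 + π ^ (m * p) * (u : K)) * (1 + π ^ (m * p + 1) * c))
    (α : L) (hα : α ^ p = algebraMap K L a)
    (hgen : IntermediateField.adjoin K {α} = ⊤) :
    (∃ β : ResidueField vL.valuationSubring,
        β ^ p = ResHom vK vL e he hcomp (residue vK.valuationSubring u) ∧
        Subfield.closure (Set.range (ResHom vK vL e he hcomp) ∪ {β}) = ⊤) ∧
      e = 1 := by
  classical
  haveI hloc : IsLocalHom (VIntHom vK vL e hcomp) := VIntHom_isLocalHom vK vL e he hcomp
  haveI : NeZero p := ⟨hp.ne_zero⟩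
  haveI : Nonempty (Fin p) := ⟨⟨0, hp.pos⟩⟩
  set ι := VIntHom vK vL e hcomp with hιdef
  set φ := ResHom vK vL e he hcomp with hφdef
  set aK := algebraMap K L with haKdef
  set F := ResidueField vK.valuationSubring
  set E := ResidueField vL.valuationSubring
  have hφι : ∀ x : vK.valuationSubring, φ (residue _ x) = residue _ (ι x) := fun x =>
    IsLocalRing.ResidueField.map_residue _ x
  have hιcoe : ∀ x : vK.valuationSubring, ((ι x : vL.valuationSubring) : L) = aK (x : K) :=
    fun x => rfl
  -- numerics
  have hp2 : 2 ≤ p := hp.two_le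
  have hmeK : m * (p - 1) < eK := by
    have h' : m * (p - 1) * p < eK * p := by
      calc m * (p - 1) * p = m * p * (p - 1) := by ring
        _ < eK * p := hbound
    exact Nat.lt_of_mul_lt_mul_right h'
  have hmeKz : (m : ℤ) * ((p : ℤ) - 1) < (eK : ℤ) := by
    have := hmeK
    have hcast : ((p : ℤ) - 1) = ((p - 1 : ℕ) : ℤ) := by
      have : (1 : ℕ) ≤ p := hp.one_le
      push_cast [Nat.cast_sub this]
      ring
    rw [hcast]
    exact_mod_cast this
  -- the residue of u is nonzero, so vK u = 1
  have hu0 : residue vK.valuationSubring u ≠ 0 := fun h =>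
    hu ⟨0, by rw [zero_pow hp.ne_zero, h]⟩
  have hvu : vK (u : K) = 1 := val_eq_one_of_residue_ne vK hu0
  -- powers of π
  have hπoz : vK π = oz (-1) := hπ
  have hvπn : ∀ n : ℕ, vK (π ^ n) = oz (-(n : ℤ)) := fun n => by
    rw [map_pow, hπoz, oz_pow, show ((n : ℤ) * -1) = -(n : ℤ) by ring]
  have hπ0 : π ≠ 0 := by
    intro h0
    rw [h0, map_zero] at hπoz
    exact (oz_ne_zero _) hπoz.symm
  -- ζ facts
  have hζ1 : ζ ≠ 1 := hζ.ne_one hp.one_lt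
  have hvζ : vK ζ = 1 :=
    zm0_pow_eq_one hp.ne_zero (by rw [← map_pow, hζ.pow_eq_one, map_one])
  -- the p-th roots of unity
  have hcard : (nthRootsFinset p (1 : K)).card = p := hζ.card_nthRootsFinset
  have h1S : (1 : K) ∈ nthRootsFinset p (1 : K) := (mem_nthRootsFinset hp.pos (1 : K)).2 (one_pow p)
  have hμ1 : ∀ μ ∈ nthRootsFinset p (1 : K), vK μ = 1 := fun μ hμ =>
    zm0_pow_eq_one hp.ne_zero
      (by rw [← map_pow, (mem_nthRootsFinset hp.pos (1 : K)).1 hμ, map_one])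
  have hroot1 : ∀ μ ∈ nthRootsFinset p (1 : K), μ ≠ 1 → vK (1 - μ) = vK (1 - ζ) := by
    intro μ hμ hμne
    have hμp : μ ^ p = 1 := (mem_nthRootsFinset hp.pos (1 : K)).1 hμ
    obtain ⟨i, hip, hpow⟩ := hζ.eq_pow_of_pow_eq_one hμp
    have hi0 : i ≠ 0 := by
      intro h0; rw [h0, pow_zero] at hpow; exact hμne hpow.symm
    have h1 : vK (1 - μ) ≤ vK (1 - ζ) := by
      rw [vK.map_sub_swap 1 μ, vK.map_sub_swap 1 ζ, ← hpow]
      exact val_pow_sub_one_le vK (le_of_eq hvζ) i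
    have hco : Nat.Coprime i p :=
      (Nat.Coprime.symm ((Nat.Prime.coprime_iff_not_dvd hp).2
        (Nat.not_dvd_of_pos_of_lt (Nat.pos_of_ne_zero hi0) hip)))
    obtain ⟨j, -, hj⟩ := Nat.exists_mul_mod_eq_one_of_coprime hco hp.one_lt
    have hμj : μ ^ j = ζ := by
      rw [← hpow, ← pow_mul]
      conv_lhs => rw [show i * j = p * (i * j / p) + i * j % p from by
        rw [Nat.div_add_mod]]
      rw [pow_add, pow_mul, hζ.pow_eq_one, one_pow, one_mul, hj, pow_one]
    have h2 : vK (1 - ζ) ≤ vK (1 - μ) := by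
      rw [vK.map_sub_swap 1 ζ, vK.map_sub_swap 1 μ, ← hμj]
      exact val_pow_sub_one_le vK (le_of_eq (hμ1 μ hμ)) j
    exact le_antisymm h1 h2
  have hprod : ∏ μ ∈ (nthRootsFinset p (1 : K)).erase 1, (1 - μ) = (p : K) := by
    have hXp := X_pow_sub_one_eq_prod hp.pos hζ
    have h2 : (X : K[X]) ^ p - 1 =
        (X - C 1) * ∏ μ ∈ (nthRootsFinset p (1 : K)).erase 1, (X - C μ) := by
      rw [hXp, ← Finset.mul_prod_erase _ _ h1S]
    have hXne : (X : K[X]) - C 1 ≠ 0 := X_sub_C_ne_zero 1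
    have h3 : (∏ μ ∈ (nthRootsFinset p (1 : K)).erase 1, ((X : K[X]) - C μ))
        = ∑ i ∈ Finset.range p, (X : K[X]) ^ i := by
      apply mul_left_cancel₀ hXne
      rw [← h2, C_1, mul_comm ((X : K[X]) - 1), geom_sum_mul]
    have h4 := congrArg (Polynomial.eval 1) h3
    rw [eval_prod, eval_finset_sum] at h4
    simp only [eval_sub, eval_X, eval_C, eval_pow, one_pow, Finset.sum_const,
      Finset.card_range, nsmul_eq_mul, mul_one] at h4
    exact h4
  -- the valuation of 1 - ζ
  obtain ⟨z, hzζ, hzm⟩ :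
      ∃ z : ℤ, vK (1 - ζ) = oz z ∧ z ≤ -(m : ℤ) - 1 := by
    have hprodv : vK (1 - ζ) ^ (p - 1) = oz (-(eK : ℤ)) := by
      have hmp := map_prod vK (fun μ => 1 - μ) ((nthRootsFinset p (1 : K)).erase 1)
      rw [hprod] at hmp
      have hconst : ∏ μ ∈ (nthRootsFinset p (1 : K)).erase 1, vK (1 - μ)
          = vK (1 - ζ) ^ (p - 1) := by
        rw [Finset.prod_congr rfl (fun μ hμ' => hroot1 μ (Finset.mem_of_mem_erase hμ')
          (Finset.ne_of_mem_erase hμ')), Finset.prod_const,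
          Finset.card_erase_of_mem h1S, hcard]
      rw [hconst] at hmp
      rw [← hmp, heK]
      rfl
    have hne : vK (1 - ζ) ≠ 0 := by
      intro h0
      rw [h0, zero_pow (by omega : p - 1 ≠ 0)] at hprodv
      exact (oz_ne_zero _) hprodv.symm
    obtain ⟨z, hz⟩ := eq_oz_of_ne_zero hne
    refine ⟨z, hz, ?_⟩
    rw [hz, oz_pow, oz_inj] at hprodv
    have hcast : ((p - 1 : ℕ) : ℤ) = (p : ℤ) - 1 := by
      have : (1 : ℕ) ≤ p := hp.one_le
      push_cast [Nat.cast_sub this]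
      ring
    rw [hcast] at hprodv
    by_contra hcon
    push_neg at hcon
    have hq : (0 : ℤ) < (p : ℤ) - 1 := by
      have h2p : (2 : ℤ) ≤ (p : ℤ) := by exact_mod_cast hp2
      linarith
    have h1 : ((p : ℤ) - 1) * (-(m : ℤ)) ≤ ((p : ℤ) - 1) * z :=
      mul_le_mul_of_nonneg_left (by linarith) (le_of_lt hq)
    rw [hprodv] at h1
    have h2 : ((p : ℤ) - 1) * (-(m : ℤ)) = -((m : ℤ) * ((p : ℤ) - 1)) := by ring
    rw [h2] at h1
    linarith [hmeKz]
  -- the valuation of a - 1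
  obtain ⟨c, hc, hae⟩ := ha
  have hvx : vK (π ^ (m * p) * (u : K)) = oz (-((m : ℤ) * p)) := by
    rw [map_mul, hvπn, hvu, mul_one, oz_inj]
    push_cast
    ring
  have hv_rest : vK (a - 1 - π ^ (m * p) * (u : K)) ≤ oz (-((m : ℤ) * p) - 1) := by
    have hy : vK (π ^ (m * p + 1) * c) ≤ oz (-((m : ℤ) * p) - 1) := by
      rw [map_mul]
      calc vK (π ^ (m * p + 1)) * vK c ≤ vK (π ^ (m * p + 1)) * 1 := mul_le_mul_right hc _
        _ = oz (-((m * p + 1 : ℕ) : ℤ)) := by rw [mul_one, hvπn]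
        _ ≤ oz (-((m : ℤ) * p) - 1) := by rw [oz_le]; push_cast; omega
    have hxle : vK (π ^ (m * p) * (u : K)) ≤ 1 := by
      rw [hvx, oz_le_one]
      have h0 : (0 : ℤ) ≤ (m : ℤ) * p := by positivity
      linarith
    have heq : a - 1 - π ^ (m * p) * (u : K)
        = π ^ (m * p + 1) * c + (π ^ (m * p) * (u : K)) * (π ^ (m * p + 1) * c) := by
      rw [hae]; ring
    rw [heq]
    refine le_trans (vK.map_add _ _) (max_le hy ?_)
    rw [map_mul]
    calc vK (π ^ (m * p) * (u : K)) * vK (π ^ (m * p + 1) * c)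
        ≤ 1 * oz (-((m : ℤ) * p) - 1) := mul_le_mul' hxle hy
      _ = oz (-((m : ℤ) * p) - 1) := one_mul _
  have hva1 : vK (a - 1) = oz (-((m : ℤ) * p)) := by
    have : a - 1 = π ^ (m * p) * (u : K) + (a - 1 - π ^ (m * p) * (u : K)) := by ring
    rw [this, Valuation.map_add_eq_of_lt_left]
    · exact hvx
    · rw [hvx]
      exact lt_of_le_of_lt hv_rest (by rw [oz_lt]; omega)
  -- transfer to L
  have hvaL : vL (α ^ p - 1) = oz (-((m : ℤ) * p * e)) := by
    have h1 : α ^ p - 1 = aK (a - 1) := by rw [map_sub, map_one, hα]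
    rw [h1, haKdef, hcomp, hva1, oz_pow]
    congr 1
    ring
  have hfac : α ^ p - 1 = ∏ μ ∈ nthRootsFinset p (1 : K), (α - aK μ) := by
    have h := congrArg (fun q : K[X] => Polynomial.eval α (q.map aK))
      (X_pow_sub_one_eq_prod hp.pos hζ)
    simp only [Polynomial.map_sub, Polynomial.map_pow, Polynomial.map_X, Polynomial.map_one,
      Polynomial.map_prod, Polynomial.map_C, eval_sub, eval_pow, eval_X,
      eval_one, eval_prod, eval_C] at h
    exact h
  have hvμL : ∀ μ ∈ nthRootsFinset p (1 : K), vL (aK (μ - 1)) ≤ oz (-((m : ℤ) * e)) := by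
    intro μ hμ
    by_cases hμ1' : μ = 1
    · subst hμ1'
      simp only [sub_self, map_zero]
      exact zero_le'
    · rw [haKdef, hcomp]
      have hvμ : vK (μ - 1) = oz z := by
        rw [vK.map_sub_swap μ 1, hroot1 μ hμ hμ1', hzζ]
      rw [hvμ, oz_pow, oz_le]
      have hzm' : z ≤ -(m : ℤ) := by linarith
      have h3 : (e : ℤ) * z ≤ (e : ℤ) * (-(m : ℤ)) :=
        mul_le_mul_of_nonneg_left hzm' (by positivity)
      have h4 : (e : ℤ) * (-(m : ℤ)) = -((m : ℤ) * e) := by ring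
      linarith
  have hvα1 : vL (α - 1) ≤ oz (-((m : ℤ) * e)) := by
    obtain ⟨μ, hμS, hμle⟩ : ∃ μ ∈ nthRootsFinset p (1 : K), vL (α - aK μ) ≤ oz (-((m : ℤ) * e)) := by
      by_contra hcon
      push_neg at hcon
      have hlb : ∀ μ ∈ nthRootsFinset p (1 : K), oz (-((m : ℤ) * e) + 1) ≤ vL (α - aK μ) :=
        fun μ hμ => lt_oz_iff.1 (hcon μ hμ)
      have hge : oz (-((m : ℤ) * e) + 1) ^ p ≤ ∏ μ ∈ nthRootsFinset p (1 : K), vL (α - aK μ) := by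
        have hconst : ∏ _μ ∈ nthRootsFinset p (1 : K), oz (-((m : ℤ) * e) + 1)
            = oz (-((m : ℤ) * e) + 1) ^ p := by
          rw [Finset.prod_const, hcard]
        exact hconst ▸ Finset.prod_le_prod' hlb
      rw [← map_prod vL, ← hfac, hvaL, oz_pow, oz_le] at hge
      have he1 : (1 : ℤ) ≤ (e : ℤ) := by exact_mod_cast he
      have hp1 : (2 : ℤ) ≤ (p : ℤ) := by exact_mod_cast hp2
      have hr : (p : ℤ) * (-((m : ℤ) * e) + 1) = -((m : ℤ) * p * e) + p := by ring
      rw [hr] at hge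
      linarith
    have h2 : vL (aK (μ - 1)) ≤ oz (-((m : ℤ) * e)) := hvμL μ hμS
    have heqα : α - 1 = (α - aK μ) + aK (μ - 1) := by
      rw [map_sub, map_one]; ring
    rw [heqα]
    exact le_trans (vL.map_add _ _) (max_le hμle h2)
  -- the element t
  have hπL : vL (aK π ^ m) = oz (-((m : ℤ) * e)) := by
    rw [map_pow, haKdef, hcomp, hπoz, oz_pow, oz_pow]
    congr 1
    ring
  have hπL0 : aK π ^ m ≠ 0 :=
    pow_ne_zero m fun h0 => hπ0 (aK.injective (by rw [h0, map_zero]))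
  set t : L := (α - 1) / aK π ^ m with htdef
  have ht_mul : t * aK π ^ m = α - 1 := div_mul_cancel₀ _ hπL0
  have hvt1 : vL t ≤ 1 := by
    rw [htdef, map_div₀, hπL, div_le_one₀ (zero_lt_iff.2 (oz_ne_zero _))]
    exact hvα1
  set t' : vL.valuationSubring := ⟨t, hvt1⟩ with ht'def
  -- the key congruence t^p ≡ u
  have hkey : vL (t ^ p - aK (u : K)) < 1 := by
    have he1 : (1 : ℤ) ≤ (e : ℤ) := by exact_mod_cast he
    have hπLn : vL (aK π ^ (m * p)) = oz (-((m : ℤ) * p * e)) := by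
      rw [map_pow, haKdef, hcomp, hπoz, oz_pow, oz_pow, oz_inj]
      push_cast; ring
    have h1 : t ^ p * aK π ^ (m * p) = (α - 1) ^ p := by
      rw [pow_mul, ← mul_pow, ht_mul]
    have hbin : (α : L) ^ p = (∑ i ∈ Finset.Ico 1 p, (α - 1) ^ i * (p.choose i : L))
        + 1 + (α - 1) ^ p := by
      have h := add_pow (α - 1) 1 p
      rw [sub_add_cancel] at h
      rw [h, Finset.sum_range_succ, Finset.range_eq_Ico, Finset.sum_eq_sum_Ico_succ_bot hp.pos]
      simp only [one_pow, mul_one, pow_zero, Nat.choose_self, Nat.choose_zero_right,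
        Nat.cast_one, one_mul]
      ring
    have hT : (t ^ p - aK (u : K)) * aK π ^ (m * p)
        = aK (a - 1 - π ^ (m * p) * (u : K))
          - ∑ i ∈ Finset.Ico 1 p, (α - 1) ^ i * (p.choose i : L) := by
      have hmap : aK (a - 1 - π ^ (m * p) * (u : K))
          = α ^ p - 1 - aK (π ^ (m * p) * (u : K)) := by
        rw [map_sub, map_sub, map_one, hα]
      have hx2 : aK (u : K) * aK π ^ (m * p) = aK (π ^ (m * p) * (u : K)) := by
        rw [map_mul, map_pow, mul_comm]
      rw [sub_mul, h1, hx2, hmap]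
      linear_combination -hbin
    have hb1 : vL (aK (a - 1 - π ^ (m * p) * (u : K))) ≤ oz ((-((m : ℤ) * p) - 1) * e) := by
      rw [haKdef, hcomp]
      calc vK (a - 1 - π ^ (m * p) * (u : K)) ^ e ≤ oz (-((m : ℤ) * p) - 1) ^ e :=
            pow_le_pow_left' hv_rest e
        _ = oz ((-((m : ℤ) * p) - 1) * e) := by rw [oz_pow, oz_inj]; ring
    have hb2 : ∀ i ∈ Finset.Ico 1 p, vL ((α - 1) ^ i * (p.choose i : L))
        ≤ oz (-(((eK : ℤ) + m) * e)) := by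
      intro i hi
      rw [Finset.mem_Ico] at hi
      obtain ⟨d, hd⟩ := hp.dvd_choose_self (by omega) hi.2
      have hch : ((p.choose i : ℕ) : L) = (p : L) * (d : L) := by rw [hd]; push_cast; ring
      have hpL : vL ((p : L)) = oz (-((eK : ℤ) * e)) := by
        have hnc : ((p : ℕ) : L) = aK ((p : ℕ) : K) := by rw [map_natCast]
        rw [hnc, haKdef, hcomp, show vK ((p : ℕ) : K) = oz (-(eK : ℤ)) from heK,
          oz_pow, oz_inj]
        ring
      have hdL : vL ((d : L)) ≤ 1 := val_natCast_le_one vL d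
      have hα1i : vL ((α - 1) ^ i) ≤ oz (-((m : ℤ) * e)) := by
        rw [map_pow]
        calc vL (α - 1) ^ i ≤ oz (-((m : ℤ) * e)) ^ i := pow_le_pow_left' hvα1 i
          _ = oz ((i : ℤ) * (-((m : ℤ) * e))) := oz_pow _ i
          _ ≤ oz (-((m : ℤ) * e)) := by
              rw [oz_le]
              have h1i : (1 : ℤ) ≤ (i : ℤ) := by exact_mod_cast hi.1
              have hme : (0 : ℤ) ≤ (m : ℤ) * e := by positivity
              nlinarith
      have hchle : vL ((p.choose i : L)) ≤ oz (-((eK : ℤ) * e)) := by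
        rw [hch, map_mul, hpL]
        calc oz (-((eK : ℤ) * e)) * vL ((d : L)) ≤ oz (-((eK : ℤ) * e)) * 1 :=
              mul_le_mul_right hdL _
          _ = oz (-((eK : ℤ) * e)) := mul_one _
      calc vL ((α - 1) ^ i * (p.choose i : L))
          = vL ((α - 1) ^ i) * vL ((p.choose i : L)) := map_mul vL _ _
        _ ≤ oz (-((m : ℤ) * e)) * oz (-((eK : ℤ) * e)) := mul_le_mul' hα1i hchle
        _ = oz (-(((eK : ℤ) + m) * e)) := by rw [oz_mul, oz_inj]; ring
    have hsumb : vL (∑ i ∈ Finset.Ico 1 p, (α - 1) ^ i * (p.choose i : L))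
        ≤ oz (-(((eK : ℤ) + m) * e)) := vL.map_sum_le hb2
    have hlt : vL ((t ^ p - aK (u : K)) * aK π ^ (m * p)) < oz (-((m : ℤ) * p * e)) := by
      rw [hT]
      refine lt_of_le_of_lt (vL.map_sub _ _) (max_lt ?_ ?_)
      · refine lt_of_le_of_lt hb1 ?_
        rw [oz_lt]
        have hr : (-((m : ℤ) * p) - 1) * e = -((m : ℤ) * p * e) - e := by ring
        linarith [hr]
      · refine lt_of_le_of_lt hsumb ?_
        rw [oz_lt]
        have hmp' : (m : ℤ) * p < (eK : ℤ) + m := by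
          have hr : (m : ℤ) * ((p : ℤ) - 1) = (m : ℤ) * p - m := by ring
          have h' := hmeKz
          rw [hr] at h'
          linarith
        have h5 : ((m : ℤ) * p) * e < ((eK : ℤ) + m) * e :=
          mul_lt_mul_of_pos_right hmp' (by exact_mod_cast he)
        have hr2 : ((m : ℤ) * p) * e = (m : ℤ) * p * e := by ring
        linarith [h5]
    rw [map_mul, hπLn] at hlt
    by_contra hge
    push_neg at hge
    have hcontr : oz (-((m : ℤ) * p * e)) ≤ vL (t ^ p - aK (u : K)) * oz (-((m : ℤ) * p * e)) := by
      calc oz (-((m : ℤ) * p * e)) = 1 * oz (-((m : ℤ) * p * e)) := (one_mul _).symm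
        _ ≤ _ := mul_le_mul_left hge _
    exact absurd hlt (not_lt.2 hcontr)
  set β := residue vL.valuationSubring t' with hβdef
  have hβp : β ^ p = φ (residue vK.valuationSubring u) := by
    have hmem : t' ^ p - ι u ∈ maximalIdeal vL.valuationSubring :=
      mem_max_of_val_lt vL (by
        show vL ((t' ^ p - ι u : vL.valuationSubring) : L) < 1
        have hcoe : ((t' ^ p - ι u : vL.valuationSubring) : L) = t ^ p - aK (u : K) := by
          push_cast [hιcoe]
          try rfl
        rw [hcoe]
        exact hkey)
    have := (Ideal.Quotient.eq (I := maximalIdeal vL.valuationSubring)).2 hmem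
    rw [hφι, hβdef, ← map_pow]
    exact this
  have hβ0 : β ≠ 0 := by
    intro h0
    apply hu0
    have : φ (residue vK.valuationSubring u) = 0 := by rw [← hβp, h0, zero_pow hp.ne_zero]
    exact (_root_.map_eq_zero φ).1 this
  have hvt : vL t = 1 := by
    apply val_eq_one_of_residue_ne vL (x := t')
    exact hβ0
  -- minimal polynomial of β over F
  letI : Algebra F E := φ.toAlgebra
  have halg : algebraMap F E = φ := rfl
  have hirr : Irreducible (X ^ p - C (residue vK.valuationSubring u) : F[X]) :=
    X_pow_sub_C_irreducible_of_prime hp (fun b hb => hu ⟨b, hb⟩)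
  have hmin : minpoly F β = X ^ p - C (residue vK.valuationSubring u) := by
    refine (minpoly.eq_of_irreducible_of_monic hirr ?_ (monic_X_pow_sub_C _ hp.ne_zero)).symm
    rw [map_sub, map_pow, aeval_X, aeval_C, halg, hβp, sub_self]
  have hLIβ : LinearIndependent F (fun i : Fin p => β ^ (i : ℕ)) := by
    have h := linearIndependent_pow (K := F) β
    rw [hmin, natDegree_X_pow_sub_C] at h
    exact h
  -- key valuation lemma
  have hsum_coe : ∀ g : Fin p → vK.valuationSubring,
      ((∑ i, ι (g i) * t' ^ (i : ℕ) : vL.valuationSubring) : L) =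
        ∑ i, aK ((g i : K)) * t ^ (i : ℕ) := by
    intro g
    rw [show ((∑ i, ι (g i) * t' ^ (i : ℕ) : vL.valuationSubring) : L)
        = vL.valuationSubring.toSubring.subtype (∑ i, ι (g i) * t' ^ (i : ℕ)) from rfl, map_sum]
    refine Finset.sum_congr rfl fun i _ => ?_
    rw [map_mul, map_pow]
    rfl
  have hsum_res : ∀ g : Fin p → vK.valuationSubring,
      residue vL.valuationSubring (∑ i, ι (g i) * t' ^ (i : ℕ)) =
        ∑ i, φ (residue vK.valuationSubring (g i)) * β ^ (i : ℕ) := by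
    intro g
    rw [map_sum]
    refine Finset.sum_congr rfl fun i _ => ?_
    rw [map_mul, map_pow, hφι, hβdef]
  have KL : ∀ c : Fin p → K, (∀ i, vK (c i) ≤ 1) → (∃ i, vK (c i) = 1) →
      vL (∑ i, aK (c i) * t ^ (i : ℕ)) = 1 := by
    intro c hle hex
    obtain ⟨i0, hi0⟩ := hex
    set g : Fin p → vK.valuationSubring := fun i => ⟨c i, hle i⟩ with hgdef
    have hW : (∑ i, aK (c i) * t ^ (i : ℕ))
        = ((∑ i, ι (g i) * t' ^ (i : ℕ) : vL.valuationSubring) : L) := (hsum_coe g).symm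
    rw [hW]
    apply val_eq_one_of_residue_ne vL
    rw [hsum_res g]
    intro h0
    have hcoeffs := Fintype.linearIndependent_iff.1 hLIβ
      (fun i => residue vK.valuationSubring (g i)) ?_ i0
    · exact residue_ne_zero_of_val_eq_one vK (x := g i0) hi0 hcoeffs
    · rw [← h0]
      refine Finset.sum_congr rfl fun i _ => ?_
      rw [Algebra.smul_def, halg]
  have KL2 : ∀ c : Fin p → K, ∀ y : L, y = ∑ i, aK (c i) * t ^ (i : ℕ) →
      (∃ i, c i ≠ 0) →
      ∃ d : K, d ≠ 0 ∧ (∀ i, vK (c i) ≤ vK d) ∧ vL y = vK d ^ e := by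
    intro c y hy hex
    obtain ⟨i1, hi1⟩ := hex
    obtain ⟨i0, _, hi0⟩ := Finset.exists_mem_eq_sup Finset.univ
      ⟨i1, Finset.mem_univ i1⟩ (fun i => vK (c i))
    have hsup : ∀ i, vK (c i) ≤ vK (c i0) := fun i =>
      hi0 ▸ Finset.le_sup (f := fun i => vK (c i)) (Finset.mem_univ i)
    have hMne : vK (c i0) ≠ 0 := by
      intro h0
      apply hi1
      have h1 : vK (c i1) ≤ vK (c i0) := hsup i1
      rw [h0, le_zero_iff] at h1
      exact (Valuation.zero_iff vK).1 h1
    have hd0 : c i0 ≠ 0 := fun h0 => hMne (by rw [h0, map_zero])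
    have hb1 : ∀ i, vK (c i / c i0) ≤ 1 := fun i => by
      rw [map_div₀, div_le_one₀ (zero_lt_iff.2 hMne)]
      exact hsup i
    have hb2 : vK (c i0 / c i0) = 1 := by rw [div_self hd0, map_one]
    have hKL := KL (fun i => c i / c i0) hb1 ⟨i0, hb2⟩
    have hsum2 : (∑ i, aK (c i / c i0) * t ^ (i : ℕ)) = aK (c i0)⁻¹ * y := by
      rw [hy, Finset.mul_sum]
      refine Finset.sum_congr rfl fun i _ => ?_
      rw [div_eq_mul_inv, map_mul, map_inv₀]
      ring
    rw [hsum2, map_mul, hcomp, map_inv₀, inv_pow] at hKL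
    have hpne : vK (c i0) ^ e ≠ 0 := pow_ne_zero _ hMne
    exact ⟨c i0, hd0, hsup, ((inv_mul_eq_one₀ hpne).1 hKL).symm⟩
  -- finite dimensionality and the basis of powers of t
  have hLIt : LinearIndependent K (fun i : Fin p => t ^ (i : ℕ)) := by
    rw [Fintype.linearIndependent_iff]
    intro g hg
    by_contra hcon
    push_neg at hcon
    obtain ⟨i1, hi1⟩ := hcon
    have hzero : (0 : L) = ∑ i, aK (g i) * t ^ (i : ℕ) := by
      rw [← hg]
      exact Finset.sum_congr rfl fun i _ => by rw [Algebra.smul_def, haKdef]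
    obtain ⟨d, hd0, _, hval⟩ := KL2 g 0 hzero ⟨i1, hi1⟩
    rw [map_zero] at hval
    exact pow_ne_zero e ((Valuation.ne_zero_iff vK).2 hd0) hval.symm
  have hint : IsIntegral K α :=
    ⟨X ^ p - C a, monic_X_pow_sub_C a hp.ne_zero, by
      simp only [eval₂_sub, eval₂_pow, eval₂_X, eval₂_C]
      rw [show (algebraMap K L) a = aK a from rfl, ← hα, sub_self]⟩
  haveI hfd : FiniteDimensional K L := by
    have h1 : FiniteDimensional K (IntermediateField.adjoin K {α}) :=
      IntermediateField.adjoin.finiteDimensional hint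
    rw [hgen] at h1
    exact IntermediateField.topEquiv.toLinearEquiv.finiteDimensional
  have hfinr : Module.finrank K L = p := by
    refine le_antisymm ?_ ?_
    · have h2 : Module.finrank K (IntermediateField.adjoin K {α}) = (minpoly K α).natDegree :=
        IntermediateField.adjoin.finrank hint
      have h3 : (minpoly K α).natDegree ≤ p := by
        have hdvd : minpoly K α ∣ X ^ p - C a := minpoly.dvd K α (by
          simp only [map_sub, map_pow, aeval_X, aeval_C]
          rw [show (algebraMap K L) a = aK a from rfl, ← hα, sub_self])
        have h6 := Polynomial.natDegree_le_of_dvd hdvd (X_pow_sub_C_ne_zero hp.pos a)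
        rwa [natDegree_X_pow_sub_C] at h6
      have h4 : Module.finrank K L = Module.finrank K (IntermediateField.adjoin K {α}) := by
        rw [hgen, IntermediateField.finrank_top']
      omega
    · have h5 := hLIt.fintype_card_le_finrank
      rwa [Fintype.card_fin] at h5
  obtain ⟨B, hB⟩ : ∃ B : Module.Basis (Fin p) K L, ∀ i, B i = t ^ (i : ℕ) := by
    refine ⟨basisOfLinearIndependentOfCardEqFinrank hLIt (by simp [hfinr]), fun i => ?_⟩
    rw [coe_basisOfLinearIndependentOfCardEqFinrank]
  have hrepr : ∀ y : L, y = ∑ i, aK (B.repr y i) * t ^ (i : ℕ) := by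
    intro y
    conv_lhs => rw [← B.sum_repr y]
    refine Finset.sum_congr rfl fun i _ => ?_
    rw [hB, Algebra.smul_def, haKdef]
  -- e = 1
  have he1 : e = 1 := by
    obtain ⟨y, hy⟩ := hsurjL (oz (-1))
    have hy0 : y ≠ 0 := by
      intro h0; rw [h0, map_zero] at hy; exact (oz_ne_zero _) hy.symm
    have hex : ∃ i, (B.repr y i : K) ≠ 0 := by
      by_contra hall
      push_neg at hall
      apply hy0
      rw [hrepr y]
      exact Finset.sum_eq_zero fun i _ => by rw [hall i, map_zero, zero_mul]
    obtain ⟨d, hd0, _, hval⟩ := KL2 (fun i => B.repr y i) y (hrepr y) hex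
    rw [hy] at hval
    obtain ⟨w, hw⟩ := eq_oz_of_ne_zero ((Valuation.ne_zero_iff vK).2 hd0)
    rw [hw, oz_pow] at hval
    have hval' : (e : ℤ) * w = -1 := oz_inj.1 hval.symm
    have hdvd : (e : ℤ) ∣ 1 := (dvd_neg).1 ⟨w, hval'.symm⟩
    have he2 : (e : ℤ) = 1 ∨ (e : ℤ) = -1 := Int.isUnit_iff.1 (isUnit_of_dvd_one hdvd)
    omega
  refine ⟨⟨β, hβp, ?_⟩, he1⟩
  -- the residue field is generated by β
  rw [eq_top_iff]
  rintro x -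
  obtain ⟨w, rfl⟩ := IsLocalRing.residue_surjective (R := vL.valuationSubring) x
  by_cases hall : ∀ i, (B.repr (w : L) i) = 0
  · have hw0 : (w : L) = 0 := by
      rw [hrepr (w : L)]
      exact Finset.sum_eq_zero fun i _ => by rw [hall i, map_zero, zero_mul]
    rw [show w = 0 from Subtype.ext hw0, map_zero]
    exact Subfield.zero_mem _
  · push_neg at hall
    obtain ⟨d, hd0, hleD, hval⟩ := KL2 (fun i => B.repr (w : L) i) (w : L) (hrepr (w : L)) hall
    have hwle : vL (w : L) ≤ 1 := w.2
    have hdle : vK d ≤ 1 := by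
      by_contra hgt
      push_neg at hgt
      have hlt1 : (1 : ℤₘ₀) < vK d ^ e := one_lt_pow₀ hgt he.ne'
      rw [← hval] at hlt1
      exact absurd hwle (not_le.2 hlt1)
    have hcle : ∀ i, vK (B.repr (w : L) i) ≤ 1 := fun i => le_trans (hleD i) hdle
    set g : Fin p → vK.valuationSubring := fun i => ⟨B.repr (w : L) i, hcle i⟩ with hgdef
    have hweq : w = ∑ i, ι (g i) * t' ^ (i : ℕ) := by
      apply Subtype.ext
      rw [hsum_coe g]
      exact hrepr (w : L)
    rw [hweq, hsum_res g]
    refine Subfield.sum_mem _ fun i _ => ?_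
    refine Subfield.mul_mem _ ?_ (Subfield.pow_mem _ ?_ _)
    · exact Subfield.subset_closure (Set.mem_union_left _ (Set.mem_range_self _))
    · exact Subfield.subset_closure (Set.mem_union_right _ rfl)
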